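/- (Newton's circle-squaring series.) Let R > 0 and 0 ≤ B ≤ R be real numbers. Then twice the area under the circular arc y = √(R² − x²) from 0 to B satisfies 2·∫_0^B √(R² − x²) dx = ∑_{n=0}^∞ (−1)^n·C(1/2,n)·2R²·(B/R)^{2n+1}/(2n+1), a convergent series whose first terms are 2RB − B³/(3R) − B⁵/(20R³) − B⁷/(56R⁵) − 5B⁹/(576R⁷) − ⋯ (obtained by integrating term by term the binomial expansion of √(R² − x²)). -/

import Mathlib

private lemma ring_choose_succ (r : ℝ) (n : ℕ) :
    (n + 1 : ℝ) * Ring.choose r (n + 1) = (r - n) * Ring.choose r n := by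
  have h1 := Ring.descPochhammer_eq_factorial_smul_choose r (n + 1)
  have h2 := Ring.descPochhammer_eq_factorial_smul_choose r n
  rw [descPochhammer_succ_right] at h1
  rw [Polynomial.smeval_mul, h2, Polynomial.smeval_sub, Polynomial.smeval_X] at h1
  simp only [Polynomial.smeval_natCast, nsmul_eq_mul, Nat.factorial_succ, Nat.cast_mul,
    pow_one, pow_zero, mul_one, smul_eq_mul] at h1
  have hf : (n.factorial : ℝ) ≠ 0 := Nat.cast_ne_zero.mpr n.factorial_ne_zero
  apply mul_left_cancel₀ hf
  push_cast at h1 ⊢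
  linear_combination -h1

private noncomputable def nc (n : ℕ) : ℝ := Ring.choose ((1:ℝ)/2) n
private noncomputable def na (n : ℕ) : ℝ := |nc n|

private lemma na_nonneg (n : ℕ) : 0 ≤ na n := abs_nonneg _

private lemma nc_zero : nc 0 = 1 := Ring.choose_zero_right _
private lemma na_one : na 1 = 1/2 := by
  rw [na, nc, Ring.choose_one_right]; norm_num

private lemma na_succ_succ (n : ℕ) :
    ((n:ℝ) + 2) * na (n + 2) = ((n:ℝ) + 1/2) * na (n + 1) := by
  have h := ring_choose_succ ((1:ℝ)/2) (n + 1)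
  have := congrArg abs h
  rw [abs_mul, abs_mul] at this
  rw [na, na]
  push_cast at this
  rw [abs_of_nonneg (by positivity : (0:ℝ) ≤ (n:ℝ) + 1 + 1)] at this
  rw [abs_of_nonpos (by push_cast; linarith : (1:ℝ)/2 - ((n:ℝ)+1) ≤ 0)] at this
  push_cast
  simp only [nc]
  push_cast
  linear_combination this

private lemma na_sum_range (N : ℕ) :
    ∑ n ∈ Finset.range N, na (n + 1) = 1 - 2 * ((N:ℝ) + 1) * na (N + 1) := by
  induction N with
  | zero => simp [na_one]
  | succ N ih =>
    rw [Finset.sum_range_succ, ih]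
    have h := na_succ_succ N
    push_cast
    linarith

private lemma na_tail_le (N : ℕ) : ∑ n ∈ Finset.range N, na (n + 1) ≤ 1 := by
  rw [na_sum_range]
  nlinarith [na_nonneg (N + 1), (by positivity : (0:ℝ) ≤ (N:ℝ) + 1)]

private lemma na_summable : Summable na := by
  rw [← summable_nat_add_iff 1]
  exact summable_of_sum_range_le (fun n => na_nonneg _) na_tail_le

private lemma na_tsum_tail_le : ∑' n, na (n + 1) ≤ 1 :=
  Summable.tsum_le_of_sum_range_le ((summable_nat_add_iff 1).mpr na_summable) na_tail_le

private lemma nc_norm_term_le {y : ℝ} (hy : |y| ≤ 1) (n : ℕ) : ‖nc n * y ^ n‖ ≤ na n := by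
  rw [norm_mul, norm_pow]
  calc ‖nc n‖ * ‖y‖ ^ n ≤ ‖nc n‖ * 1 ^ n := by
        gcongr; exact hy
    _ = na n := by simp [na, Real.norm_eq_abs]

private lemma nc_summable_norm {y : ℝ} (hy : |y| ≤ 1) :
    Summable (fun n => ‖nc n * y ^ n‖) :=
  na_summable.of_nonneg_of_le (fun _ => norm_nonneg _) (nc_norm_term_le hy)

private lemma nc_vandermonde (n : ℕ) :
    ∑ ij ∈ Finset.HasAntidiagonal.antidiagonal n, nc ij.1 * nc ij.2 = (Nat.choose 1 n : ℝ) := by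
  have h := Ring.add_choose_eq (r := (1:ℝ)/2) (s := (1:ℝ)/2) n (Commute.all _ _)
  norm_num at h
  simp only [nc]
  rw [← h, show (1:ℝ) = ((1:ℕ):ℝ) by norm_num, Ring.choose_natCast]

private lemma hasSum_sqrt_binomial {y : ℝ} (h0 : -1 ≤ y) (h1 : y ≤ 0) :
    HasSum (fun n => nc n * y ^ n) (Real.sqrt (1 + y)) := by
  have habs : |y| ≤ 1 := abs_le.mpr ⟨h0, h1.trans zero_le_one⟩
  have hnorm := nc_summable_norm habs
  have hsummable : Summable (fun n => nc n * y ^ n) := hnorm.of_norm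
  have hnorm' : Summable (fun n => ‖nc (n + 1) * y ^ (n + 1)‖) := by
    have := (summable_nat_add_iff (f := fun n => ‖nc n * y ^ n‖) 1).mpr hnorm
    simpa using this
  have hna' : Summable (fun n => na (n + 1)) := (summable_nat_add_iff 1).mpr na_summable
  have htailsummable : Summable (fun n => nc (n + 1) * y ^ (n + 1)) := hnorm'.of_norm
  set S := ∑' n, nc n * y ^ n with hS
  have hS2 : S * S = 1 + y := by
    rw [hS, tsum_mul_tsum_eq_tsum_sum_antidiagonal_of_summable_norm hnorm hnorm]
    have hterm : ∀ n, ∑ ij ∈ Finset.HasAntidiagonal.antidiagonal n, (nc ij.1 * y ^ ij.1) * (nc ij.2 * y ^ ij.2)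
        = (Nat.choose 1 n : ℝ) * y ^ n := by
      intro n
      rw [← nc_vandermonde n, Finset.sum_mul]
      refine Finset.sum_congr rfl fun ij hij => ?_
      rw [← Finset.HasAntidiagonal.mem_antidiagonal.mp hij, pow_add]
      ring
    rw [tsum_congr hterm, tsum_eq_sum (s := Finset.range 2)]
    · simp [Finset.sum_range_succ]
    · intro n hn
      have h1n : 1 < n := by simp only [Finset.mem_range] at hn; omega
      rw [Nat.choose_eq_zero_of_lt h1n]
      simp
  have hS0 : 0 ≤ S := by
    rw [hS, Summable.tsum_eq_zero_add hsummable]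
    have htail : |∑' n, nc (n + 1) * y ^ (n + 1)| ≤ 1 := by
      calc |∑' n, nc (n + 1) * y ^ (n + 1)| ≤ ∑' n, ‖nc (n + 1) * y ^ (n + 1)‖ := by
            simpa [Real.norm_eq_abs] using norm_tsum_le_tsum_norm hnorm'
        _ ≤ ∑' n, na (n + 1) :=
            Summable.tsum_le_tsum (fun n => nc_norm_term_le habs (n + 1)) hnorm' hna'
        _ ≤ 1 := na_tsum_tail_le
    have h2 := (abs_le.mp htail).1
    simp only [nc_zero, pow_zero, mul_one]
    linarith
  have hsqrt : Real.sqrt (1 + y) = S := by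
    rw [← hS2]; exact Real.sqrt_mul_self hS0
  rw [hsqrt]
  exact hsummable.hasSum

private lemma na_def (n : ℕ) : na n = |nc n| := rfl
private lemma nc_def (n : ℕ) : nc n = Ring.choose ((1:ℝ)/2) n := rfl

/-- Newton's circle-squaring series: twice the area under y = √(R² − x²) from
0 to B is the sum of the series obtained by term-by-term integration of the
binomial expansion of √(R² − x²). -/
theorem newton_circle_squaring_series (R B : ℝ) (hR : 0 < R) (hB0 : 0 ≤ B) (hBR : B ≤ R) :
    HasSum
      (fun n : ℕ => (-1 : ℝ) ^ n * Ring.choose ((1 : ℝ) / 2) n *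
        (2 * R ^ 2) * (B / R) ^ (2 * n + 1) / (2 * n + 1))
      (2 * ∫ x in (0 : ℝ)..B, Real.sqrt (R ^ 2 - x ^ 2)) := by
  have hR0 : R ≠ 0 := hR.ne'
  set F : ℕ → ℝ → ℝ := fun n x => (2 * R * nc n * (-1) ^ n / R ^ (2 * n)) * x ^ (2 * n) with hF
  -- pointwise sum of the series
  have hpt : ∀ x ∈ Set.Icc (0:ℝ) B, HasSum (fun n => F n x) (2 * Real.sqrt (R ^ 2 - x ^ 2)) := by
    intro x hx
    obtain ⟨hx0, hxB⟩ := hx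
    have hxR : x ≤ R := hxB.trans hBR
    have hy0 : -1 ≤ -(x / R) ^ 2 := by
      have : (x / R) ^ 2 ≤ 1 := by
        rw [sq_le_one_iff_abs_le_one, abs_div, abs_of_nonneg hx0, abs_of_pos hR,
          div_le_one hR]
        exact hxR
      linarith
    have hy1 : -(x / R) ^ 2 ≤ 0 := neg_nonpos.mpr (sq_nonneg _)
    have h := (hasSum_sqrt_binomial hy0 hy1).mul_left (2 * R)
    have hval : 2 * R * Real.sqrt (1 + -(x / R) ^ 2) = 2 * Real.sqrt (R ^ 2 - x ^ 2) := by
      have h1 : 1 + -(x / R) ^ 2 = (R ^ 2 - x ^ 2) / R ^ 2 := by field_simp; ring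
      rw [h1, Real.sqrt_div (by nlinarith : (0:ℝ) ≤ R ^ 2 - x ^ 2),
        Real.sqrt_sq hR.le]
      field_simp
    have hterm : (fun n => 2 * R * (nc n * (-(x / R) ^ 2) ^ n)) = fun n => F n x := by
      funext n
      rw [hF]
      rw [show (-(x / R) ^ 2) = (-1) * (x / R) ^ 2 by ring, mul_pow, ← pow_mul, div_pow]
      simp only []
      field_simp
    rw [hval, hterm] at h
    exact h
  -- integrability
  have hint : ∀ n, MeasureTheory.IntegrableOn (F n) (Set.Ioc (0:ℝ) B) := by
    intro n
    exact (Continuous.integrableOn_Ioc (by continuity))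
  -- integral computation
  have hcalc : ∀ (c : ℝ) (n : ℕ),
      ∫ x in Set.Ioc (0:ℝ) B, c * x ^ (2 * n) = c * (B ^ (2 * n + 1) / (2 * n + 1)) := by
    intro c n
    rw [← intervalIntegral.integral_of_le hB0, intervalIntegral.integral_const_mul,
      integral_pow]
    norm_num
  -- norm rewriting
  have hFnorm : ∀ n, (fun x => ‖F n x‖) = fun x => (2 * R * na n / R ^ (2 * n)) * x ^ (2 * n) := by
    intro n
    funext x
    rw [hF]
    simp only [norm_mul, norm_div, norm_pow, Real.norm_eq_abs]
    rw [na_def]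
    simp [abs_two, abs_of_pos hR, Even.pow_abs (even_two_mul n), abs_neg, abs_one]
  -- summability of integrals of norms
  have hF_sum : Summable fun n => ∫ x in Set.Ioc (0:ℝ) B, ‖F n x‖ := by
    refine Summable.of_nonneg_of_le
      (fun n => MeasureTheory.integral_nonneg fun x => norm_nonneg _)
      (fun n => ?_) (na_summable.mul_left (2 * R ^ 2))
    rw [show (fun x => ‖F n x‖) = fun x => (2 * R * na n / R ^ (2 * n)) * x ^ (2 * n) from
      hFnorm n]
    rw [hcalc]
    have h1 : B ^ (2 * n + 1) ≤ R ^ (2 * n + 1) := pow_le_pow_left₀ hB0 hBR _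
    have hna : 0 ≤ na n := by rw [na_def]; exact abs_nonneg _
    have h2 : (1:ℝ) ≤ (2 * (n:ℝ) + 1) := by
      have : (0:ℝ) ≤ (n:ℝ) := Nat.cast_nonneg n
      linarith
    calc 2 * R * na n / R ^ (2 * n) * (B ^ (2 * n + 1) / (2 * n + 1))
        ≤ 2 * R * na n / R ^ (2 * n) * (R ^ (2 * n + 1) / 1) := by
          gcongr <;> positivity
      _ = 2 * R ^ 2 * na n := by rw [pow_succ]; field_simp
  have main := MeasureTheory.hasSum_integral_of_summable_integral_norm hint hF_sum
  have h2 : (∫ x in Set.Ioc (0:ℝ) B, ∑' n, F n x)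
      = 2 * ∫ x in (0:ℝ)..B, Real.sqrt (R ^ 2 - x ^ 2) := by
    rw [intervalIntegral.integral_of_le hB0, ← MeasureTheory.integral_const_mul]
    refine MeasureTheory.setIntegral_congr_fun measurableSet_Ioc fun x hx => ?_
    exact (hpt x ⟨hx.1.le, hx.2⟩).tsum_eq
  rw [h2] at main
  have h3 : (fun n => ∫ x in Set.Ioc (0:ℝ) B, F n x)
      = fun n : ℕ => (-1 : ℝ) ^ n * Ring.choose ((1 : ℝ) / 2) n *
        (2 * R ^ 2) * (B / R) ^ (2 * n + 1) / (2 * n + 1) := by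
    funext n
    rw [hF]
    simp only []
    rw [hcalc, ← nc_def, div_pow]
    have hpow : (0:ℝ) < R ^ (2 * n) := by positivity
    have hden : (0:ℝ) < (2 * (n:ℝ) + 1) := by positivity
    field_simp
    ring
  rw [h3] at main
  exact main
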